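/- For every integer k≥1, the interpolating polynomial p_k of σ_k has degree 2k, its coefficient of X^{2k} equals 1/(2^k k!), and its coefficient of X^{2k−1} equals −(2k+1)/(3·2^k (k−1)!); the interpolating polynomial r_k of Q_k has coefficient of X^{2k} equal to (−1)^k/(2^k k!) and coefficient of X^{2k−1} equal to (−1)^k (2k−5)/(3·2^k (k−1)!). -/

import Mathlib

def sigmaP (i j : ℕ) : ℚ :=
  ∑ t ∈ (Finset.Icc 1 (j - 1)).powersetCard i, ∏ m ∈ t, (m : ℚ)

def QP (j : ℕ) : ℕ → ℚ
  | 0 => 1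
  | k + 1 => -∑ i : Fin (k + 1), sigmaP (i + 1) j * QP j (k - i)
  termination_by k => k
  decreasing_by omega

open Polynomial Finset

lemma sigmaP_zero (j : ℕ) : sigmaP 0 j = 1 := by
  simp [sigmaP]

lemma sigmaP_succ_one (i : ℕ) : sigmaP (i + 1) 1 = 0 := by
  have : Finset.powersetCard (i + 1) (∅ : Finset ℕ) = ∅ := by
    rw [Finset.powersetCard_eq_empty]; simp
  simp [sigmaP, this]

lemma sigmaP_rec (i j : ℕ) :
    sigmaP (i + 1) (j + 1) = sigmaP (i + 1) j + (j : ℚ) * sigmaP i j := by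
  cases j with
  | zero => simp [sigmaP]
  | succ m =>
    have hins : Finset.Icc 1 (m + 1) = insert (m + 1) (Finset.Icc 1 m) := by
      exact (Finset.insert_Icc_right_eq_Icc_add_one (by omega)).symm
    have hnot : (m + 1) ∉ Finset.Icc 1 m := by simp
    unfold sigmaP
    simp only [Nat.add_sub_cancel]
    rw [hins, Finset.powersetCard_succ_insert hnot, Finset.sum_union, Finset.sum_image]
    · congr 1
      rw [Finset.mul_sum]
      refine Finset.sum_congr rfl fun t ht => ?_
      have htsub : t ⊆ Finset.Icc 1 m := (Finset.mem_powersetCard.mp ht).1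
      have : (m + 1) ∉ t := fun h => hnot (htsub h)
      rw [Finset.prod_insert this]
    · intro a ha b hb hab
      have haa : (m + 1) ∉ a := fun h => hnot ((Finset.mem_powersetCard.mp ha).1 h)
      have hbb : (m + 1) ∉ b := fun h => hnot ((Finset.mem_powersetCard.mp hb).1 h)
      have := congrArg (Finset.erase · (m + 1)) hab
      simpa [Finset.erase_insert, haa, hbb] using this
    · rw [Finset.disjoint_left]
      intro t ht ht'
      have h1 : (m + 1) ∉ t := fun h => hnot ((Finset.mem_powersetCard.mp ht).1 h)
      obtain ⟨s, hs, rfl⟩ := Finset.mem_image.mp ht'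
      exact h1 (Finset.mem_insert_self _ _)

lemma QP_conv (j k : ℕ) :
    ∑ i ∈ Finset.range (k + 1), sigmaP i j * QP j (k - i) = if k = 0 then 1 else 0 := by
  cases k with
  | zero => simp [sigmaP_zero, QP]
  | succ k =>
    rw [Finset.sum_range_succ']
    have hdef : QP j (k + 1) = -∑ i ∈ Finset.range (k + 1), sigmaP (i + 1) j * QP j (k - i) := by
      rw [QP, Fin.sum_univ_eq_sum_range (fun n => sigmaP (n + 1) j * QP j (k - n)) (k + 1)]
    simp only [Nat.succ_sub_succ, Nat.sub_zero, sigmaP_zero, one_mul, hdef]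
    simp
lemma QP_one (k : ℕ) : QP 1 (k + 1) = 0 := by
  rw [QP, Fin.sum_univ_eq_sum_range (fun n => sigmaP (n + 1) 1 * QP 1 (k - n)) (k + 1)]
  simp [sigmaP_succ_one]

lemma conv_unique (A u v : ℕ → ℚ) (hA : A 0 = 1)
    (h : ∀ k, ∑ i ∈ Finset.range (k + 1), A i * u (k - i)
       = ∑ i ∈ Finset.range (k + 1), A i * v (k - i)) : ∀ k, u k = v k := by
  intro k
  induction k using Nat.strong_induction_on with
  | _ k ih =>
    have hk := h k
    rw [Finset.sum_range_succ', Finset.sum_range_succ'] at hk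
    have htail : ∀ i ∈ Finset.range k, A (i + 1) * u (k - (i + 1)) = A (i + 1) * v (k - (i + 1)) := by
      intro i hi
      rw [ih (k - (i + 1)) (by simp at hi; omega)]
    rw [Finset.sum_congr rfl htail] at hk
    simpa [hA] using hk

lemma QP_rec (j k : ℕ) : QP j k = QP (j + 1) k + (j : ℚ) * (if k = 0 then 0 else QP (j + 1) (k - 1)) := by
  set T : ℕ → ℚ := fun m => QP (j + 1) m + (j : ℚ) * (if m = 0 then 0 else QP (j + 1) (m - 1)) with hT
  have key : ∀ m, ∑ i ∈ Finset.range (m + 1), sigmaP i j * T (m - i) = if m = 0 then 1 else 0 := by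
    intro m
    have expand : ∀ i ∈ Finset.range (m + 1), sigmaP i j * T (m - i)
        = sigmaP i j * QP (j + 1) (m - i)
          + (j : ℚ) * (if m - i = 0 then 0 else sigmaP i j * QP (j + 1) (m - i - 1)) := by
      intro i hi
      by_cases hmi : m - i = 0 <;> simp [hT, hmi] <;> ring
    rw [Finset.sum_congr rfl expand, Finset.sum_add_distrib]
    -- second sum: ∑_{i ∈ range (m+1)} j * (if m-i=0 then 0 else σ_i * Q'(m-i-1))
    have hsecond : ∑ i ∈ Finset.range (m + 1),
        (j : ℚ) * (if m - i = 0 then 0 else sigmaP i j * QP (j + 1) (m - i - 1))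
        = (j : ℚ) * ∑ i ∈ Finset.range m, sigmaP i j * QP (j + 1) (m - 1 - i) := by
      rw [Finset.sum_range_succ]
      simp only [Nat.sub_self, if_true, eq_self_iff_true, ite_true, mul_zero, add_zero]
      rw [Finset.mul_sum]
      apply Finset.sum_congr rfl
      intro i hi
      have hi' : i < m := Finset.mem_range.mp hi
      have h1 : m - i ≠ 0 := by omega
      have h2 : m - i - 1 = m - 1 - i := by omega
      rw [if_neg h1, h2]
    -- first sum
    have hfirst : ∑ i ∈ Finset.range (m + 1), sigmaP i j * QP (j + 1) (m - i)
        = (if m = 0 then 1 else 0)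
          - (j : ℚ) * ∑ i ∈ Finset.range m, sigmaP i j * QP (j + 1) (m - 1 - i) := by
      have hsig : ∀ i ∈ Finset.range m, sigmaP (i + 1) j * QP (j + 1) (m - (i + 1))
          = sigmaP (i + 1) (j + 1) * QP (j + 1) (m - (i + 1))
            - (j : ℚ) * (sigmaP i j * QP (j + 1) (m - 1 - i)) := by
        intro i hi
        have := sigmaP_rec i j
        have h2 : m - (i + 1) = m - 1 - i := by omega
        rw [h2]
        have : sigmaP (i + 1) j = sigmaP (i + 1) (j + 1) - (j : ℚ) * sigmaP i j := by
          rw [sigmaP_rec]; ring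
        rw [this]; ring
      rw [Finset.sum_range_succ', Finset.sum_congr rfl hsig, Finset.sum_sub_distrib]
      have hconv := QP_conv (j + 1) m
      rw [Finset.sum_range_succ'] at hconv
      rw [← Finset.mul_sum]
      have : sigmaP 0 j * QP (j + 1) (m - 0) = sigmaP 0 (j + 1) * QP (j + 1) (m - 0) := by
        rw [sigmaP_zero, sigmaP_zero]
      rw [this]
      linarith [hconv]
    rw [hfirst, hsecond]
    ring
  have := conv_unique (fun i => sigmaP i j) (QP j) T (sigmaP_zero j)
    (fun m => by rw [QP_conv, key]) k
  simpa [hT] using this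

lemma QP_rec' (j k : ℕ) : QP j (k + 1) = QP (j + 1) (k + 1) + (j : ℚ) * QP (j + 1) k := by
  have := QP_rec j (k + 1)
  simpa using this
lemma descPoch_eval_succ (n : ℕ) (x : ℚ) :
    (descPochhammer ℚ (n + 1)).eval (x + 1)
      = (descPochhammer ℚ (n + 1)).eval x + (n + 1) * (descPochhammer ℚ n).eval x := by
  have h1 : (descPochhammer ℚ (n + 1)).eval (x + 1) = (x + 1) * (descPochhammer ℚ n).eval x := by
    rw [descPochhammer_succ_left]
    simp [Polynomial.eval_comp]
  rw [h1, descPochhammer_succ_eval]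
  ring

lemma descPoch_eval_one (n : ℕ) : (descPochhammer ℚ (n + 2)).eval 1 = 0 := by
  induction n with
  | zero =>
    rw [descPochhammer_succ_eval]
    norm_num
  | succ m ih =>
    rw [descPochhammer_succ_eval, ih, zero_mul]

lemma exists_antidiff : ∀ (n : ℕ) (g : Polynomial ℚ), g.natDegree ≤ n →
    ∃ f : Polynomial ℚ, f.natDegree ≤ n + 1 ∧ f.eval 1 = 0 ∧
      ∀ x : ℚ, f.eval (x + 1) = f.eval x + g.eval x := by
  intro n
  induction n with
  | zero =>
    intro g hg
    refine ⟨Polynomial.C (g.coeff 0) * (Polynomial.X - 1), ?_, by simp, ?_⟩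
    · apply le_trans (Polynomial.natDegree_mul_le)
      have : ((Polynomial.X : Polynomial ℚ) - 1).natDegree ≤ 1 := by compute_degree
      simpa using this
    · intro x
      have : g = Polynomial.C (g.coeff 0) := Polynomial.eq_C_of_natDegree_le_zero hg
      rw [this]
      simp
      ring
  | succ n ih =>
    intro g hg
    set c := g.coeff (n + 1) with hc
    set g2 := g - Polynomial.C c * descPochhammer ℚ (n + 1) with hg2
    have hg2deg : g2.natDegree ≤ n := by
      rw [Polynomial.natDegree_le_iff_coeff_eq_zero]
      intro N hN
      rcases Nat.lt_or_ge (n + 1) N with h | h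
      · have h1 : g.coeff N = 0 := by
          apply Polynomial.coeff_eq_zero_of_natDegree_lt; omega
        have h2 : (Polynomial.C c * descPochhammer ℚ (n + 1)).coeff N = 0 := by
          apply Polynomial.coeff_eq_zero_of_natDegree_lt
          apply lt_of_le_of_lt (Polynomial.natDegree_mul_le)
          simp [descPochhammer_natDegree]
          omega
        simp [hg2, h1, h2]
      · have hN1 : N = n + 1 := by omega
        subst hN1
        have hmonic : (descPochhammer ℚ (n + 1)).coeff (n + 1) = 1 := by
          have := monic_descPochhammer ℚ (n + 1)
          have hd := descPochhammer_natDegree (R := ℚ) (n + 1)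
          rw [Polynomial.Monic, Polynomial.leadingCoeff, hd] at this
          exact this
        simp [hg2, Polynomial.coeff_C_mul, hmonic, hc]
    obtain ⟨f2, hf2deg, hf2one, hf2delta⟩ := ih g2 hg2deg
    refine ⟨f2 + Polynomial.C (c / (n + 2)) * descPochhammer ℚ (n + 2), ?_, ?_, ?_⟩
    · apply le_trans (Polynomial.natDegree_add_le _ _)
      apply max_le (by omega)
      apply le_trans (Polynomial.natDegree_mul_le)
      simp [descPochhammer_natDegree]
    · simp [hf2one, descPoch_eval_one]
    · intro x
      have hdp := descPoch_eval_succ (n + 1) x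
      have hg2x : g2.eval x = g.eval x - c * (descPochhammer ℚ (n + 1)).eval x := by
        simp [hg2]
      simp only [Polynomial.eval_add, Polynomial.eval_mul, Polynomial.eval_C]
      rw [hf2delta x, hdp, hg2x]
      have hne : ((n : ℚ) + 2) ≠ 0 := by positivity
      field_simp
      push_cast
      ring
lemma taylor_coeff_one' (f : Polynomial ℚ) (d : ℕ) (h : f.natDegree ≤ d + 1) :
    (Polynomial.taylor 1 f).coeff d = f.coeff d + ((d : ℚ) + 1) * f.coeff (d + 1) := by
  rw [Polynomial.taylor_coeff]
  have hdeg : (Polynomial.hasseDeriv d f).natDegree < 2 := by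
    have := Polynomial.natDegree_hasseDeriv_le f d
    omega
  rw [Polynomial.eval_eq_sum_range' hdeg]
  rw [Finset.sum_range_succ, Finset.sum_range_succ, Finset.sum_range_zero]
  rw [Polynomial.hasseDeriv_coeff, Polynomial.hasseDeriv_coeff]
  rw [Nat.zero_add, Nat.choose_self]
  have : (1 + d).choose d = d + 1 := by
    rw [Nat.add_comm]; exact Nat.choose_succ_self_right d
  have h3 : 1 + d = d + 1 := by omega
  rw [this, h3]
  push_cast
  ring

lemma taylor_coeff_two' (f : Polynomial ℚ) (d : ℕ) (h : f.natDegree ≤ d + 2) :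
    (Polynomial.taylor 1 f).coeff d = f.coeff d + ((d : ℚ) + 1) * f.coeff (d + 1)
      + (((d : ℚ) + 2) * ((d : ℚ) + 1) / 2) * f.coeff (d + 2) := by
  rw [Polynomial.taylor_coeff]
  have hdeg : (Polynomial.hasseDeriv d f).natDegree < 3 := by
    have := Polynomial.natDegree_hasseDeriv_le f d
    omega
  rw [Polynomial.eval_eq_sum_range' hdeg]
  rw [Finset.sum_range_succ, Finset.sum_range_succ, Finset.sum_range_succ, Finset.sum_range_zero]
  rw [Polynomial.hasseDeriv_coeff, Polynomial.hasseDeriv_coeff, Polynomial.hasseDeriv_coeff]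
  rw [Nat.zero_add, Nat.choose_self]
  have h1 : (1 + d).choose d = d + 1 := by
    rw [Nat.add_comm]; exact Nat.choose_succ_self_right d
  have h2 : ((2 + d).choose d : ℚ) = ((d : ℚ) + 2) * ((d : ℚ) + 1) / 2 := by
    have hsym : (2 + d).choose d = (2 + d).choose 2 := by
      rw [← Nat.choose_symm (by omega)]
      congr 1
      omega
    rw [hsym, Nat.cast_choose_two]
    push_cast
    ring
  rw [h1, h2]
  have h3 : 1 + d = d + 1 := by omega
  have h4 : 2 + d = d + 2 := by omega
  rw [h3, h4]
  push_cast
  ring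

lemma delta_coeff (f g : Polynomial ℚ) (d : ℕ) (hf : f.natDegree ≤ d + 1)
    (h : ∀ x : ℚ, f.eval (x + 1) = f.eval x + g.eval x) :
    g.coeff d = ((d : ℚ) + 1) * f.coeff (d + 1) ∧
    (∀ e : ℕ, e + 1 = d →
      g.coeff e = ((d : ℚ)) * f.coeff d + (((d : ℚ) + 1) * (d : ℚ) / 2) * f.coeff (d + 1)) := by
  have hpoly : Polynomial.taylor 1 f = f + g := by
    apply Polynomial.funext
    intro x
    rw [Polynomial.taylor_eval]
    simp [h x]
  constructor
  · have := congrArg (fun q => Polynomial.coeff q d) hpoly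
    simp only [Polynomial.coeff_add] at this
    rw [taylor_coeff_one' f d hf] at this
    linarith
  · intro e he
    have := congrArg (fun q => Polynomial.coeff q e) hpoly
    simp only [Polynomial.coeff_add] at this
    have hf2 : f.natDegree ≤ e + 2 := by omega
    rw [taylor_coeff_two' f e hf2] at this
    have he1 : e + 1 = d := he
    have he2 : e + 2 = d + 1 := by omega
    rw [he1, he2] at this
    have hec : (e : ℚ) = (d : ℚ) - 1 := by
      have : (e : ℚ) + 1 = (d : ℚ) := by exact_mod_cast congrArg (Nat.cast : ℕ → ℚ) he
      linarith
    rw [hec] at this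
    ring_nf at this ⊢
    linarith
lemma sigma_poly : ∀ k : ℕ, ∃ f : Polynomial ℚ,
    f.natDegree ≤ 2 * k ∧ (∀ j : ℕ, 1 ≤ j → f.eval (j : ℚ) = sigmaP k j) ∧
    f.coeff (2 * k) = 1 / (2 ^ k * (Nat.factorial k : ℚ)) ∧
    (1 ≤ k → f.coeff (2 * k - 1)
      = -(2 * (k : ℚ) + 1) / (3 * 2 ^ k * (Nat.factorial (k - 1) : ℚ))) := by
  intro k
  induction k with
  | zero =>
    refine ⟨1, by simp, fun j hj => by simp [sigmaP_zero], by simp, fun h => absurd h (by omega)⟩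
  | succ k ih =>
    obtain ⟨f, hdeg, hval, htop, hsub⟩ := ih
    have hgdeg : (Polynomial.X * f).natDegree ≤ 2 * k + 1 := by
      apply le_trans Polynomial.natDegree_mul_le
      rw [Polynomial.natDegree_X]
      omega
    obtain ⟨F, hFdeg, hFone, hFdelta⟩ := exists_antidiff (2 * k + 1) (Polynomial.X * f) hgdeg
    have hFval : ∀ j : ℕ, 1 ≤ j → F.eval (j : ℚ) = sigmaP (k + 1) j := by
      intro j hj
      induction j, hj using Nat.le_induction with
      | base => simpa [sigmaP_succ_one] using hFone
      | succ j hj ihj =>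
        have hd := hFdelta (j : ℚ)
        push_cast
        rw [hd, ihj, sigmaP_rec k j]
        simp [hval j hj]
    have hd := delta_coeff F (Polynomial.X * f) (2 * k + 1) hFdeg hFdelta
    have htopF := hd.1
    have hsubF := hd.2 (2 * k) rfl
    rw [Polynomial.coeff_X_mul] at htopF
    -- facts
    have hfac0 : (Nat.factorial k : ℚ) ≠ 0 := Nat.cast_ne_zero.mpr (Nat.factorial_ne_zero k)
    have hpow0 : (2 : ℚ) ^ k ≠ 0 := by positivity
    have hfacsucc : ((k + 1).factorial : ℚ) = ((k : ℚ) + 1) * (Nat.factorial k : ℚ) := by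
      rw [Nat.factorial_succ]; push_cast; ring
    have hc1 : ((2 * k + 1 : ℕ) : ℚ) + 1 ≠ 0 := by positivity
    have hF2 : F.coeff (2 * k + 1 + 1) = 1 / (2 ^ (k + 1) * ((k + 1).factorial : ℚ)) := by
      rw [htop] at htopF
      have : F.coeff (2 * k + 1 + 1)
          = (1 / (2 ^ k * (Nat.factorial k : ℚ))) / (((2 * k + 1 : ℕ) : ℚ) + 1) := by
        rw [eq_div_iff hc1]
        linarith [htopF]
      rw [this, hfacsucc]
      push_cast
      field_simp
      ring
    refine ⟨F, by omega, hFval, ?_, fun _ => ?_⟩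
    · have h1 : 2 * (k + 1) = 2 * k + 1 + 1 := by ring
      rw [h1, hF2]
    · have h1 : 2 * (k + 1) - 1 = 2 * k + 1 := by omega
      have h2 : (k + 1) - 1 = k := by omega
      rw [h1, h2]
      have hc2 : ((2 * k + 1 : ℕ) : ℚ) ≠ 0 := by positivity
      rcases Nat.eq_zero_or_pos k with hk0 | hk1
      · subst hk0
        norm_num [Nat.factorial] at hsubF hF2 ⊢
        rw [hF2] at hsubF
        linarith
      · have h3 : 2 * k = (2 * k - 1) + 1 := by omega
        have hXf : (Polynomial.X * f).coeff (2 * k) = f.coeff (2 * k - 1) := by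
          conv_lhs => rw [h3]
          rw [Polynomial.coeff_X_mul]
        rw [hXf, hsub hk1] at hsubF
        rw [hF2] at hsubF
        have hkfac : (Nat.factorial k : ℚ) = (k : ℚ) * (Nat.factorial (k - 1) : ℚ) := by
          rw [← Nat.mul_factorial_pred hk1.ne']
          push_cast
          ring
        have hfac1 : (Nat.factorial (k - 1) : ℚ) ≠ 0 := Nat.cast_ne_zero.mpr (Nat.factorial_ne_zero _)
        have hF1 : F.coeff (2 * k + 1) =
            (-(2 * (k : ℚ) + 1) / (3 * 2 ^ k * (Nat.factorial (k - 1) : ℚ))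
              - ((((2 * k + 1 : ℕ) : ℚ) + 1) * ((2 * k + 1 : ℕ) : ℚ) / 2)
                * (1 / (2 ^ (k + 1) * ((k + 1).factorial : ℚ)))) / ((2 * k + 1 : ℕ) : ℚ) := by
          rw [eq_div_iff hc2]
          linarith [hsubF]
        rw [hF1, hfacsucc, hkfac]
        have hkc : (k : ℚ) ≥ 1 := by exact_mod_cast hk1
        have hk0' : (k : ℚ) ≠ 0 := by linarith
        have hk10 : (k : ℚ) + 1 ≠ 0 := by linarith
        push_cast
        have h2k1 : 2 * (k : ℚ) + 1 ≠ 0 := by linarith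
        field_simp
        ring
lemma QP_zero (j : ℕ) : QP j 0 = 1 := by rw [QP]

lemma q_poly : ∀ k : ℕ, ∃ f : Polynomial ℚ,
    f.natDegree ≤ 2 * k ∧ (∀ j : ℕ, 1 ≤ j → f.eval (j : ℚ) = QP j k) ∧
    f.coeff (2 * k) = (-1) ^ k / (2 ^ k * (Nat.factorial k : ℚ)) ∧
    (1 ≤ k → f.coeff (2 * k - 1)
      = (-1) ^ k * (2 * (k : ℚ) - 5) / (3 * 2 ^ k * (Nat.factorial (k - 1) : ℚ))) := by
  intro k
  induction k with
  | zero =>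
    refine ⟨1, by simp, fun j hj => by simp [QP_zero], by simp, fun h => absurd h (by omega)⟩
  | succ k ih =>
    obtain ⟨f, hdeg, hval, htop, hsub⟩ := ih
    set g : Polynomial ℚ := -(Polynomial.X * Polynomial.taylor 1 f) with hg
    have hgdeg : g.natDegree ≤ 2 * k + 1 := by
      rw [hg, Polynomial.natDegree_neg]
      apply le_trans Polynomial.natDegree_mul_le
      rw [Polynomial.natDegree_X, Polynomial.natDegree_taylor]
      omega
    have hgeval : ∀ x : ℚ, g.eval x = -(x * f.eval (x + 1)) := by
      intro x
      rw [hg]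
      simp [Polynomial.taylor_eval]
    obtain ⟨F, hFdeg, hFone, hFdelta⟩ := exists_antidiff (2 * k + 1) g hgdeg
    have hFval : ∀ j : ℕ, 1 ≤ j → F.eval (j : ℚ) = QP j (k + 1) := by
      intro j hj
      induction j, hj using Nat.le_induction with
      | base => rw [Nat.cast_one, hFone, QP_one]
      | succ j hj ihj =>
        have hd := hFdelta (j : ℚ)
        have hfj : f.eval ((j : ℚ) + 1) = QP (j + 1) k := by
          have := hval (j + 1) (by omega)
          push_cast at this
          exact this
        push_cast
        rw [hd, ihj, hgeval, hfj, QP_rec' j k]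
        ring
    have hd := delta_coeff F g (2 * k + 1) hFdeg hFdelta
    have htopF := hd.1
    have hsubF := hd.2 (2 * k) rfl
    have hfck1 : f.coeff (2 * k + 1) = 0 :=
      Polynomial.coeff_eq_zero_of_natDegree_lt (by omega)
    have hgtop : g.coeff (2 * k + 1) = -f.coeff (2 * k) := by
      rw [hg, Polynomial.coeff_neg, Polynomial.coeff_X_mul]
      rw [taylor_coeff_one' f (2 * k) (by omega), hfck1]
      ring
    rw [hgtop, htop] at htopF
    -- facts
    have hfac0 : (Nat.factorial k : ℚ) ≠ 0 := Nat.cast_ne_zero.mpr (Nat.factorial_ne_zero k)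
    have hpow0 : (2 : ℚ) ^ k ≠ 0 := by positivity
    have hfacsucc : ((k + 1).factorial : ℚ) = ((k : ℚ) + 1) * (Nat.factorial k : ℚ) := by
      rw [Nat.factorial_succ]; push_cast; ring
    have hc1 : ((2 * k + 1 : ℕ) : ℚ) + 1 ≠ 0 := by positivity
    have hF2 : F.coeff (2 * k + 1 + 1) = (-1) ^ (k + 1) / (2 ^ (k + 1) * ((k + 1).factorial : ℚ)) := by
      have : F.coeff (2 * k + 1 + 1)
          = (-(-1) ^ k / (2 ^ k * (Nat.factorial k : ℚ))) / (((2 * k + 1 : ℕ) : ℚ) + 1) := by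
        rw [eq_div_iff hc1]
        linear_combination -htopF
      rw [this, hfacsucc, pow_succ, pow_succ]
      push_cast
      field_simp
      ring
    refine ⟨F, by omega, hFval, ?_, fun _ => ?_⟩
    · have h1 : 2 * (k + 1) = 2 * k + 1 + 1 := by ring
      rw [h1, hF2]
    · have h1 : 2 * (k + 1) - 1 = 2 * k + 1 := by omega
      have h2 : (k + 1) - 1 = k := by omega
      rw [h1, h2]
      have hc2 : ((2 * k + 1 : ℕ) : ℚ) ≠ 0 := by positivity
      rcases Nat.eq_zero_or_pos k with hk0 | hk1
      · subst hk0
        have hg0 : g.coeff 0 = 0 := by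
          rw [hg, Polynomial.coeff_neg, Polynomial.mul_coeff_zero, Polynomial.coeff_X_zero]
          ring
        norm_num [Nat.factorial] at hsubF hF2 ⊢
        rw [hg0] at hsubF
        rw [hF2] at hsubF
        linarith
      · have h3 : 2 * k = (2 * k - 1) + 1 := by omega
        have hgsub : g.coeff (2 * k) = -(f.coeff (2 * k - 1) + 2 * (k : ℚ) * f.coeff (2 * k)) := by
          rw [hg, Polynomial.coeff_neg]
          have hXt : (Polynomial.X * Polynomial.taylor 1 f).coeff (2 * k)
              = (Polynomial.taylor 1 f).coeff (2 * k - 1) := by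
            conv_lhs => rw [h3]
            rw [Polynomial.coeff_X_mul]
          rw [hXt, taylor_coeff_one' f (2 * k - 1) (by omega)]
          have h4 : 2 * k - 1 + 1 = 2 * k := by omega
          have h5 : ((2 * k - 1 : ℕ) : ℚ) = 2 * (k : ℚ) - 1 := by
            have : (2 * k - 1 : ℕ) + 1 = 2 * k := by omega
            have := congrArg (Nat.cast : ℕ → ℚ) this
            push_cast at this
            linarith
          rw [h4, h5]
          ring
        rw [hgsub, hsub hk1, htop, hF2] at hsubF
        have hkfac : (Nat.factorial k : ℚ) = (k : ℚ) * (Nat.factorial (k - 1) : ℚ) := by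
          rw [← Nat.mul_factorial_pred hk1.ne']
          push_cast
          ring
        have hfac1 : (Nat.factorial (k - 1) : ℚ) ≠ 0 := Nat.cast_ne_zero.mpr (Nat.factorial_ne_zero _)
        have hF1 : F.coeff (2 * k + 1) =
            (-((-1) ^ k * (2 * (k : ℚ) - 5) / (3 * 2 ^ k * (Nat.factorial (k - 1) : ℚ))
                + 2 * (k : ℚ) * ((-1) ^ k / (2 ^ k * (Nat.factorial k : ℚ))))
              - ((((2 * k + 1 : ℕ) : ℚ) + 1) * ((2 * k + 1 : ℕ) : ℚ) / 2)
                * ((-1) ^ (k + 1) / (2 ^ (k + 1) * ((k + 1).factorial : ℚ)))) / ((2 * k + 1 : ℕ) : ℚ) := by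
          rw [eq_div_iff hc2]
          linear_combination -hsubF
        rw [hF1, hfacsucc, hkfac]
        have hkc : (k : ℚ) ≥ 1 := by exact_mod_cast hk1
        have hk0' : (k : ℚ) ≠ 0 := by linarith
        have hk10 : (k : ℚ) + 1 ≠ 0 := by linarith
        rw [pow_succ, pow_succ]
        push_cast
        have h2k1 : 2 * (k : ℚ) + 1 ≠ 0 := by linarith
        field_simp
        ring
lemma eq_of_eval_nat (p q : Polynomial ℚ)
    (h : ∀ j : ℕ, 1 ≤ j → p.eval (j : ℚ) = q.eval (j : ℚ)) : p = q := by
  have hsub : p - q = 0 := by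
    apply Polynomial.eq_zero_of_infinite_isRoot
    apply Set.infinite_of_injective_forall_mem (f := fun n : ℕ => ((n + 1 : ℕ) : ℚ))
    · intro a b hab
      have : (a + 1 : ℕ) = (b + 1 : ℕ) := Nat.cast_injective hab
      omega
    · intro n
      simp only [Set.mem_setOf_eq, Polynomial.IsRoot, Polynomial.eval_sub]
      rw [h (n + 1) (by omega)]
      ring
  exact sub_eq_zero.mp hsub

theorem stmt10 (k : ℕ) (hk : 1 ≤ k) (p r : Polynomial ℚ)
    (hpdeg : p.natDegree ≤ 2 * k)
    (hpval : ∀ j : ℕ, 1 ≤ j → p.eval (j : ℚ) = sigmaP k j)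
    (hrdeg : r.natDegree ≤ 2 * k)
    (hrval : ∀ j : ℕ, 1 ≤ j → r.eval (j : ℚ) = QP j k) :
    p.natDegree = 2 * k ∧
    p.coeff (2 * k) = 1 / (2 ^ k * (k.factorial : ℚ)) ∧
    p.coeff (2 * k - 1) = -(2 * (k : ℚ) + 1) / (3 * 2 ^ k * ((k - 1).factorial : ℚ)) ∧
    r.coeff (2 * k) = (-1) ^ k / (2 ^ k * (k.factorial : ℚ)) ∧
    r.coeff (2 * k - 1) =
      (-1) ^ k * (2 * (k : ℚ) - 5) / (3 * 2 ^ k * ((k - 1).factorial : ℚ)) := by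
  obtain ⟨f, hfdeg, hfval, hftop, hfsub⟩ := sigma_poly k
  obtain ⟨g, hgdeg, hgval, hgtop, hgsub⟩ := q_poly k
  have hpf : p = f := eq_of_eval_nat p f fun j hj => by rw [hpval j hj, hfval j hj]
  have hrg : r = g := eq_of_eval_nat r g fun j hj => by rw [hrval j hj, hgval j hj]
  subst hpf hrg
  refine ⟨?_, hftop, hfsub hk, hgtop, hgsub hk⟩
  apply le_antisymm hpdeg
  apply Polynomial.le_natDegree_of_ne_zero
  rw [hftop]
  have h1 : (2 : ℚ) ^ k * (k.factorial : ℚ) > 0 := by positivity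
  exact one_div_ne_zero (ne_of_gt h1)
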